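/- There exist constants C₀, c₀, c > 0 depending only on H and ε such that if C₀·n^{−2/(k−1)} < p < c₀, then with probability at least 1 − exp( −c · n² p^{k−1} log(1/p) ) the following holds simultaneously for every i ∈ {1,2,3}: |D_1(i)| < θ n p^{k−7/5} and |D_2(i)| < n p^{k−2} log(1/p). -/

import Mathlib

open MeasureTheory Real
open scoped Classical

/-- Bernoulli measure on `Bool` with success probability `p`. -/
noncomputable def bern (p : ℝ) : MeasureTheory.Measure Bool :=
  (ENNReal.ofReal p) • MeasureTheory.Measure.dirac true +
    (ENNReal.ofReal (1 - p)) • MeasureTheory.Measure.dirac false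

/-- Sample space measure for the `k`-partite random graph `G(n,p,H)`: one independent
Bernoulli(p) bit for each ordered pair of vertices (only bits with `x.1 < y.1` are used). -/
noncomputable def kpMeasure (k n : ℕ) (p : ℝ) :
    MeasureTheory.Measure ((Fin k × Fin n) → (Fin k × Fin n) → Bool) :=
  MeasureTheory.Measure.pi fun _ => MeasureTheory.Measure.pi fun _ => bern p

/-- The `k`-partite graph `G(n,p,H)` determined by a sample point: the parts are
`V_i = {i} × Fin n`, and `x ∈ V_i`, `y ∈ V_j` may be joined only when `v_i v_j ∈ E(H)`. -/
def kpGraph {k n : ℕ} (H : SimpleGraph (Fin k))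
    (ω : (Fin k × Fin n) → (Fin k × Fin n) → Bool) : SimpleGraph (Fin k × Fin n) where
  Adj x y := H.Adj x.1 y.1 ∧ (if x.1 < y.1 then ω x y else ω y x) = true
  symm := by
    constructor
    intro x y ⟨hadj, h⟩
    refine ⟨hadj.symm, ?_⟩
    rcases lt_or_gt_of_ne hadj.ne with h1 | h1
    · rw [if_pos h1] at h; rw [if_neg (not_lt.mpr h1.le)]; exact h
    · rw [if_neg (not_lt.mpr h1.le)] at h; rw [if_pos h1]; exact h
  loopless := ⟨fun x h => H.loopless.irrefl _ h.1⟩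

/-- A copy of `H` in `G(n,p,H)`: a choice `g i ∈ V_i` of one vertex per part, with
`(i, g i)` and `(j, g j)` adjacent whenever `v_i v_j ∈ E(H)`. -/
def IsCopy {k n : ℕ} (H : SimpleGraph (Fin k))
    (ω : (Fin k × Fin n) → (Fin k × Fin n) → Bool) (g : Fin k → Fin n) : Prop :=
  ∀ i j, H.Adj i j → (kpGraph H ω).Adj (i, g i) (j, g j)

open scoped Classical in
/-- `X_H^{n,p}`: the number of copies of `H` in `G(n,p,H)`. -/
noncomputable def XH {k : ℕ} (H : SimpleGraph (Fin k)) (n : ℕ)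
    (ω : (Fin k × Fin n) → (Fin k × Fin n) → Bool) : ℕ :=
  (Finset.univ.filter fun g : Fin k → Fin n => IsCopy H ω g).card

open scoped Classical in
/-- `Ψ(H,n,p) = n^k p^{e_H}`. -/
noncomputable def psi {k : ℕ} (H : SimpleGraph (Fin k)) (n : ℕ) (p : ℝ) : ℝ :=
  (n : ℝ) ^ k * p ^ H.edgeFinset.card

/-- `δ = δ(k) > 0` is the solution of `(1+δ)^k = 2`, i.e. `δ = 2^{1/k} − 1`. -/
noncomputable def deltaK (k : ℕ) : ℝ := (2 : ℝ) ^ ((1 : ℝ) / k) - 1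

open scoped Classical in
/-- `d_i(x) = |N(x) ∩ V_i|` in `G(n,p,H)`. -/
noncomputable def dPart {k n : ℕ} (H : SimpleGraph (Fin k))
    (ω : (Fin k × Fin n) → (Fin k × Fin n) → Bool) (x : Fin k × Fin n) (i : Fin k) : ℕ :=
  (Finset.univ.filter fun v : Fin n => (kpGraph H ω).Adj x (i, v)).card

/-- `d(x) = max_{i ∈ [k]} d_i(x)`. -/
noncomputable def dMax {k n : ℕ} (H : SimpleGraph (Fin k))
    (ω : (Fin k × Fin n) → (Fin k × Fin n) → Bool) (x : Fin k × Fin n) : ℕ :=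
  Finset.univ.sup (dPart H ω x)

/-- A vertex `x` is high degree if `d(x) > (1+δ)np`. -/
def HighVtx {k n : ℕ} (H : SimpleGraph (Fin k)) (p : ℝ)
    (ω : (Fin k × Fin n) → (Fin k × Fin n) → Bool) (x : Fin k × Fin n) : Prop :=
  (1 + deltaK k) * n * p < (dMax H ω x : ℝ)

/-- A copy `g` is type one if it contains a high-degree vertex from `A ∪ B ∪ C`
(the first three parts). -/
def TypeOne {k n : ℕ} (H : SimpleGraph (Fin k)) (p : ℝ)
    (ω : (Fin k × Fin n) → (Fin k × Fin n) → Bool) (g : Fin k → Fin n) : Prop :=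
  ∃ i : Fin k, (i : ℕ) < 3 ∧ HighVtx H p ω (i, g i)

open scoped Classical in
/-- `d(x,y) = max_{j ≥ 4} |N(x) ∩ N(y) ∩ V_j|` (parts are indexed from `0`, so
`j ≥ 4` in the paper's 1-indexing means `3 ≤ j` here). -/
noncomputable def dPair {k n : ℕ} (H : SimpleGraph (Fin k))
    (ω : (Fin k × Fin n) → (Fin k × Fin n) → Bool) (x y : Fin k × Fin n) : ℕ :=
  (Finset.univ.filter fun j : Fin k => 3 ≤ (j : ℕ)).sup fun j =>
    (Finset.univ.filter fun v : Fin n =>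
      (kpGraph H ω).Adj x (j, v) ∧ (kpGraph H ω).Adj y (j, v)).card

/-- A pair `(x,y)` is high degree if `d(x,y) > n p^{3/2}`. -/
def HighPair {k n : ℕ} (H : SimpleGraph (Fin k)) (p : ℝ)
    (ω : (Fin k × Fin n) → (Fin k × Fin n) → Bool) (x y : Fin k × Fin n) : Prop :=
  (n : ℝ) * p ^ ((3 : ℝ) / 2) < (dPair H ω x y : ℝ)

/-- A copy `g` is type two if `k ≥ 5` and it contains a high-degree pair belonging to
`A' × C'` or `B' × C'` (primes denoting non-high-degree vertices); here `i₀, i₁, i₂`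
are the indices of the parts `A`, `B`, `C`.  For `k = 4` no copy is type two. -/
def TypeTwo {k n : ℕ} (H : SimpleGraph (Fin k)) (p : ℝ)
    (ω : (Fin k × Fin n) → (Fin k × Fin n) → Bool) (i₀ i₁ i₂ : Fin k)
    (g : Fin k → Fin n) : Prop :=
  5 ≤ k ∧
    ((¬ HighVtx H p ω (i₀, g i₀) ∧ ¬ HighVtx H p ω (i₂, g i₂) ∧
        HighPair H p ω (i₀, g i₀) (i₂, g i₂)) ∨
     (¬ HighVtx H p ω (i₁, g i₁) ∧ ¬ HighVtx H p ω (i₂, g i₂) ∧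
        HighPair H p ω (i₁, g i₁) (i₂, g i₂)))

/-- `s = min{ log(1/p), n^{k−2} p^{(k−1)(k−2)/2} }`. -/
noncomputable def sReg (k n : ℕ) (p : ℝ) : ℝ :=
  min (Real.log (1 / p)) ((n : ℝ) ^ (k - 2) * p ^ ((k - 1) * (k - 2) / 2))

/-- `ζ = 3^{k−2} Ψ(H,n,p)/(n² p^{k−1} s)` for `k ≥ 5` and
`ζ = 225 Ψ(H,n,p)/(n² p³ s)` for `k = 4`. -/
noncomputable def zeta {k : ℕ} (H : SimpleGraph (Fin k)) (n : ℕ) (p : ℝ) : ℝ :=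
  if 5 ≤ k then (3 : ℝ) ^ (k - 2) * psi H n p / ((n : ℝ) ^ 2 * p ^ (k - 1) * sReg k n p)
  else 225 * psi H n p / ((n : ℝ) ^ 2 * p ^ 3 * sReg k n p)

open scoped Classical in
/-- `w*(a,b)`: the number of copies of `H` containing `a ∈ A` and `b ∈ B` that are
neither type one nor type two. -/
noncomputable def wStar {k n : ℕ} (H : SimpleGraph (Fin k)) (p : ℝ)
    (ω : (Fin k × Fin n) → (Fin k × Fin n) → Bool) (i₀ i₁ i₂ : Fin k)
    (a b : Fin n) : ℕ :=
  (Finset.univ.filter fun g : Fin k → Fin n =>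
    IsCopy H ω g ∧ g i₀ = a ∧ g i₁ = b ∧ ¬ TypeOne H p ω g ∧
      ¬ TypeTwo H p ω i₀ i₁ i₂ g).card

/-- An edge `ab ∈ ∇(A,B)` is heavy if `w*(a,b) > ζ`. -/
def Heavy {k n : ℕ} (H : SimpleGraph (Fin k)) (p : ℝ)
    (ω : (Fin k × Fin n) → (Fin k × Fin n) → Bool) (i₀ i₁ i₂ : Fin k)
    (a b : Fin n) : Prop :=
  (kpGraph H ω).Adj (i₀, a) (i₁, b) ∧ zeta H n p < (wStar H p ω i₀ i₁ i₂ a b : ℝ)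

open scoped Classical in
/-- `w(x)`: the number of copies of `H` containing the vertex `x = (i, v) ∈ V_i`. -/
noncomputable def wVtx {k n : ℕ} (H : SimpleGraph (Fin k))
    (ω : (Fin k × Fin n) → (Fin k × Fin n) → Bool) (i : Fin k) (v : Fin n) : ℕ :=
  (Finset.univ.filter fun g : Fin k → Fin n => IsCopy H ω g ∧ g i = v).card

open scoped Classical in
/-- `D_1(i) = { x ∈ V_i : d(x) > n p^{2/5} }`. -/
noncomputable def D1 {k n : ℕ} (H : SimpleGraph (Fin k)) (p : ℝ)
    (ω : (Fin k × Fin n) → (Fin k × Fin n) → Bool) (i : Fin k) : Finset (Fin n) :=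
  Finset.univ.filter fun v : Fin n => (n : ℝ) * p ^ ((2 : ℝ) / 5) < (dMax H ω (i, v) : ℝ)

open scoped Classical in
/-- `D_2(i) = { x ∈ V_i : (1+δ)np < d(x) ≤ n p^{2/5} }`. -/
noncomputable def D2 {k n : ℕ} (H : SimpleGraph (Fin k)) (p : ℝ)
    (ω : (Fin k × Fin n) → (Fin k × Fin n) → Bool) (i : Fin k) : Finset (Fin n) :=
  Finset.univ.filter fun v : Fin n =>
    (1 + deltaK k) * n * p < (dMax H ω (i, v) : ℝ) ∧
      (dMax H ω (i, v) : ℝ) ≤ (n : ℝ) * p ^ ((2 : ℝ) / 5)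

namespace DK
open MeasureTheory Real


lemma bern_apply (p : ℝ) (s : Set Bool) :
    bern p s = ENNReal.ofReal p * s.indicator 1 true
      + ENNReal.ofReal (1 - p) * s.indicator 1 false := by
  rw [bern, Measure.add_apply, Measure.smul_apply, Measure.smul_apply, smul_eq_mul, smul_eq_mul,
    Measure.dirac_apply' _ (Set.Finite.measurableSet (Set.toFinite s)),
    Measure.dirac_apply' _ (Set.Finite.measurableSet (Set.toFinite s))]

lemma bern_true (p : ℝ) : bern p {true} = ENNReal.ofReal p := by
  rw [bern_apply]; simp

lemma bern_false (p : ℝ) : bern p {false} = ENNReal.ofReal (1 - p) := by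
  rw [bern_apply]; simp

lemma bern_univ (p : ℝ) : bern p Set.univ = ENNReal.ofReal p + ENNReal.ofReal (1 - p) := by
  rw [bern_apply]; simp

instance (p : ℝ) : IsFiniteMeasure (bern p) := by
  constructor
  rw [bern_univ]
  exact ENNReal.add_lt_top.2 ⟨ENNReal.ofReal_lt_top, ENNReal.ofReal_lt_top⟩

lemma bern_prob {p : ℝ} (h0 : 0 ≤ p) (h1 : p ≤ 1) : IsProbabilityMeasure (bern p) := by
  constructor
  rw [bern_univ, ← ENNReal.ofReal_add h0 (by linarith)]
  norm_num

lemma kp_prob {k n : ℕ} {p : ℝ} (h0 : 0 ≤ p) (h1 : p ≤ 1) :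
    IsProbabilityMeasure (kpMeasure k n p) := by
  haveI := bern_prob h0 h1
  rw [kpMeasure]
  infer_instance

/-- every set in the sample space is measurable -/
lemma measSet {k n : ℕ} (s : Set ((Fin k × Fin n) → (Fin k × Fin n) → Bool)) :
    MeasurableSet s :=
  Set.Finite.measurableSet (Set.toFinite s)

/-- the weight of a bit value -/
noncomputable def wt (p : ℝ) (b : Bool) : ENNReal :=
  if b then ENNReal.ofReal p else ENNReal.ofReal (1 - p)

/-- Pattern lemma -/
lemma pattern_measure {k n : ℕ} {p : ℝ} (h0 : 0 ≤ p) (h1 : p ≤ 1)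
    (S : Finset ((Fin k × Fin n) × (Fin k × Fin n)))
    (σ : ((Fin k × Fin n) × (Fin k × Fin n)) → Bool) :
    kpMeasure k n p {ω | ∀ q ∈ S, ω q.1 q.2 = σ q} = ∏ q ∈ S, wt p (σ q) := by
  haveI := bern_prob h0 h1
  have hset : {ω : (Fin k × Fin n) → (Fin k × Fin n) → Bool | ∀ q ∈ S, ω q.1 q.2 = σ q}
      = Set.univ.pi (fun a => Set.univ.pi (fun b =>
          if (a, b) ∈ S then {σ (a, b)} else Set.univ)) := by
    ext ω
    simp only [Set.mem_setOf_eq, Set.mem_pi, Set.mem_univ, true_implies]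
    constructor
    · intro h a b
      by_cases hq : (a, b) ∈ S
      · simp only [hq, if_true, Set.mem_singleton_iff]
        exact h (a, b) hq
      · simp [hq]
    · intro h q hq
      have := h q.1 q.2
      simp only [Prod.mk.eta, hq, if_true, Set.mem_singleton_iff] at this
      exact this
  have hinner : ∀ a, (Measure.pi fun _ : Fin k × Fin n => bern p)
      (Set.univ.pi (fun b => if (a, b) ∈ S then {σ (a, b)} else Set.univ))
      = ∏ b : Fin k × Fin n, (if (a, b) ∈ S then wt p (σ (a, b)) else 1) := by
    intro a
    rw [Measure.pi_pi]
    refine Finset.prod_congr rfl fun b _ => ?_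
    by_cases hq : (a, b) ∈ S
    · simp only [hq, if_true]
      cases hσ : σ (a, b) <;> simp [wt, bern_true, bern_false, hσ]
    · rw [if_neg hq, if_neg hq, measure_univ]
  rw [kpMeasure, hset, Measure.pi_pi]
  calc (∏ a : Fin k × Fin n, (Measure.pi fun _ : Fin k × Fin n => bern p)
      (Set.univ.pi (fun b => if (a, b) ∈ S then {σ (a, b)} else Set.univ)))
      = ∏ a : Fin k × Fin n, ∏ b : Fin k × Fin n,
          (if (a, b) ∈ S then wt p (σ (a, b)) else 1) :=
        Finset.prod_congr rfl fun a _ => hinner a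
    _ = ∏ q ∈ Finset.univ ×ˢ Finset.univ,
          (if q ∈ S then wt p (σ q) else 1) := (Finset.prod_product' _ _ _).symm
    _ = ∏ q ∈ (Finset.univ ×ˢ Finset.univ) ∩ S, wt p (σ q) := by
        rw [Finset.prod_ite_mem]
    _ = ∏ q ∈ S, wt p (σ q) := by
        congr 1
        rw [Finset.univ_product_univ, Finset.univ_inter]

/-- the coordinate of the bit joining `(i,v)` and `(j v, u)` -/
def co (i : Fin k) (j : Fin n → Fin k) (v u : Fin n) :
    (Fin k × Fin n) × (Fin k × Fin n) :=
  if i < j v then ((i, v), (j v, u)) else ((j v, u), (i, v))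

def bitOf (ω : (Fin k × Fin n) → (Fin k × Fin n) → Bool)
    (i : Fin k) (j : Fin n → Fin k) (v u : Fin n) : Bool :=
  ω (co i j v u).1 (co i j v u).2

lemma adj_iff_bit (H : SimpleGraph (Fin k)) (ω : (Fin k × Fin n) → (Fin k × Fin n) → Bool)
    (i : Fin k) (j : Fin n → Fin k) (v u : Fin n) :
    (kpGraph H ω).Adj (i, v) (j v, u) ↔ H.Adj i (j v) ∧ bitOf ω i j v u = true := by
  show H.Adj i (j v) ∧ _ ↔ _
  by_cases h : i < j v <;> simp [bitOf, co, h]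

lemma dPart_eq_card_bit (H : SimpleGraph (Fin k)) (ω : (Fin k × Fin n) → (Fin k × Fin n) → Bool)
    {i : Fin k} {j : Fin n → Fin k} {v : Fin n} (hadj : H.Adj i (j v)) :
    dPart H ω (i, v) (j v) = (Finset.univ.filter fun u => bitOf ω i j v u = true).card := by
  unfold dPart
  congr 1
  apply Finset.filter_congr
  intro u _
  rw [adj_iff_bit]
  simp [hadj]

lemma dPart_eq_zero (H : SimpleGraph (Fin k)) (ω : (Fin k × Fin n) → (Fin k × Fin n) → Bool)
    {i : Fin k} {j : Fin n → Fin k} {v : Fin n} (hadj : ¬ H.Adj i (j v)) :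
    dPart H ω (i, v) (j v) = 0 := by
  unfold dPart
  rw [Finset.card_eq_zero, Finset.filter_eq_empty_iff]
  intro u _
  rw [adj_iff_bit]
  tauto

lemma co_injOn (i : Fin k) (j : Fin n → Fin k) (T : Finset (Fin n))
    (hj : ∀ v ∈ T, j v ≠ i) :
    ∀ x ∈ T ×ˢ (Finset.univ : Finset (Fin n)), ∀ y ∈ T ×ˢ Finset.univ,
      co i j x.1 x.2 = co i j y.1 y.2 → x = y := by
  rintro ⟨v, u⟩ hx ⟨v', u'⟩ hy heq
  rw [Finset.mem_product] at hx hy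
  simp only [co] at heq
  split_ifs at heq with h1 h2 h2
  · simp only [Prod.ext_iff] at heq ⊢
    exact ⟨heq.1.2, heq.2.2⟩
  · exfalso
    simp only [Prod.ext_iff] at heq
    exact hj v' hy.1 heq.1.1.symm
  · exfalso
    simp only [Prod.ext_iff] at heq
    exact hj v hx.1 heq.1.1
  · simp only [Prod.ext_iff] at heq ⊢
    exact ⟨heq.2.2, heq.1.2⟩

/-- measure of a full-neighborhood pattern -/
lemma pattern_prod (h0 : 0 ≤ p) (h1 : p ≤ 1)
    (i : Fin k) (j : Fin n → Fin k) (T : Finset (Fin n)) (hj : ∀ v ∈ T, j v ≠ i)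
    (F : Fin n → Finset (Fin n)) :
    kpMeasure k n p {ω | ∀ v ∈ T, ∀ u, bitOf ω i j v u = decide (u ∈ F v)}
      = ∏ v ∈ T, (ENNReal.ofReal p) ^ (F v).card
          * (ENNReal.ofReal (1 - p)) ^ (n - (F v).card) := by
  classical
  set S : Finset ((Fin k × Fin n) × (Fin k × Fin n)) :=
    (T ×ˢ Finset.univ).image (fun vu => co i j vu.1 vu.2) with hS
  set σ : ((Fin k × Fin n) × (Fin k × Fin n)) → Bool :=
    fun z => if z.1.1 = i then decide (z.2.2 ∈ F z.1.2) else decide (z.1.2 ∈ F z.2.2) with hσdef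
  have hσ : ∀ v ∈ T, ∀ u : Fin n, σ (co i j v u) = decide (u ∈ F v) := by
    intro v hv u
    by_cases h : i < j v
    · simp [hσdef, co, h]
    · have : j v ≠ i := hj v hv
      simp [hσdef, co, h, this]
  have hev : {ω : (Fin k × Fin n) → (Fin k × Fin n) → Bool |
        ∀ v ∈ T, ∀ u, bitOf ω i j v u = decide (u ∈ F v)}
      = {ω | ∀ q ∈ S, ω q.1 q.2 = σ q} := by
    ext ω
    simp only [Set.mem_setOf_eq, hS, Finset.mem_image, Finset.mem_product]
    constructor
    · rintro h q ⟨⟨v, u⟩, ⟨hv, -⟩, rfl⟩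
      rw [hσ v hv u]
      exact h v hv u
    · intro h v hv u
      rw [← hσ v hv u]
      exact h _ ⟨⟨v, u⟩, ⟨hv, Finset.mem_univ _⟩, rfl⟩
  rw [hev, pattern_measure h0 h1 S σ]
  rw [hS, Finset.prod_image (co_injOn i j T hj)]
  have : ∀ vu ∈ T ×ˢ (Finset.univ : Finset (Fin n)),
      wt p (σ (co i j vu.1 vu.2)) = wt p (decide (vu.2 ∈ F vu.1)) := by
    rintro ⟨v, u⟩ hvu
    rw [Finset.mem_product] at hvu
    rw [hσ v hvu.1 u]
  rw [Finset.prod_congr rfl this, Finset.prod_product]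
  refine Finset.prod_congr rfl fun v _ => ?_
  have : ∀ u : Fin n, wt p (decide (u ∈ F v))
      = if u ∈ F v then ENNReal.ofReal p else ENNReal.ofReal (1 - p) := by
    intro u
    by_cases h : u ∈ F v <;> simp [wt, h]
  rw [Finset.prod_congr rfl (fun u _ => this u), Finset.prod_ite, Finset.prod_const,
    Finset.prod_const]
  congr 2
  · rw [Finset.filter_mem_eq_inter, Finset.univ_inter]
  · rw [Finset.filter_not, Finset.filter_mem_eq_inter, Finset.univ_inter,
      Finset.card_sdiff_of_subset (Finset.subset_univ _), Finset.card_univ, Fintype.card_fin]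

noncomputable def tailE (n : ℕ) (p : ℝ) (s : ℕ) : ENNReal :=
  ∑ A ∈ (Finset.univ : Finset (Fin n)).powerset.filter (fun A => s ≤ A.card),
    (ENNReal.ofReal p) ^ A.card * (ENNReal.ofReal (1 - p)) ^ (n - A.card)

lemma master (h0 : 0 ≤ p) (h1 : p ≤ 1) (H : SimpleGraph (Fin k))
    {s : ℕ} (hs : 1 ≤ s) (i : Fin k) (T : Finset (Fin n)) (j : Fin n → Fin k) :
    kpMeasure k n p {ω | ∀ v ∈ T, s ≤ dPart H ω (i, v) (j v)}
      ≤ tailE n p s ^ T.card := by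
  classical
  by_cases hadj : ∀ v ∈ T, H.Adj i (j v)
  case neg =>
    push_neg at hadj
    obtain ⟨v, hv, hna⟩ := hadj
    have : {ω : (Fin k × Fin n) → (Fin k × Fin n) → Bool |
        ∀ v ∈ T, s ≤ dPart H ω (i, v) (j v)} = ∅ := by
      ext ω
      simp only [Set.mem_setOf_eq, Set.mem_empty_iff_false, iff_false, not_forall]
      refine ⟨v, hv, ?_⟩
      rw [dPart_eq_zero H ω hna]
      omega
    rw [this, measure_empty]
    exact zero_le
  case pos =>
  have hj : ∀ v ∈ T, j v ≠ i := fun v hv => (hadj v hv).ne'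
  set P : Finset (Finset (Fin n)) :=
    (Finset.univ : Finset (Fin n)).powerset.filter (fun A => s ≤ A.card) with hP
  set Fof : (∀ v ∈ T, Finset (Fin n)) → Fin n → Finset (Fin n) :=
    fun f v => if h : v ∈ T then f v h else ∅ with hFof
  have hcov : {ω : (Fin k × Fin n) → (Fin k × Fin n) → Bool |
        ∀ v ∈ T, s ≤ dPart H ω (i, v) (j v)}
      ⊆ ⋃ f ∈ T.pi (fun _ => P),
          {ω | ∀ v ∈ T, ∀ u, bitOf ω i j v u = decide (u ∈ Fof f v)} := by
    intro ω hω
    simp only [Set.mem_setOf_eq] at hω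
    set f : ∀ v ∈ T, Finset (Fin n) :=
      fun v _ => Finset.univ.filter (fun u => bitOf ω i j v u = true) with hf
    have hfP : f ∈ T.pi (fun _ => P) := by
      rw [Finset.mem_pi]
      intro v hv
      rw [hP, Finset.mem_filter, Finset.mem_powerset]
      refine ⟨Finset.subset_univ _, ?_⟩
      rw [hf]
      rw [← dPart_eq_card_bit H ω (hadj v hv)]
      exact hω v hv
    refine Set.mem_biUnion hfP ?_
    intro v hv u
    have hFf : Fof f v = Finset.univ.filter (fun u => bitOf ω i j v u = true) := by
      rw [hFof]; simp [hv, hf]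
    rw [hFf]
    by_cases hb : bitOf ω i j v u = true <;> simp [hb]
  calc kpMeasure k n p {ω | ∀ v ∈ T, s ≤ dPart H ω (i, v) (j v)}
      ≤ ∑ f ∈ T.pi (fun _ => P), kpMeasure k n p
          {ω | ∀ v ∈ T, ∀ u, bitOf ω i j v u = decide (u ∈ Fof f v)} :=
        le_trans (measure_mono hcov) (measure_biUnion_finset_le _ _)
    _ = ∑ f ∈ T.pi (fun _ => P), ∏ x ∈ T.attach,
          ((ENNReal.ofReal p) ^ (f x.1 x.2).card
            * (ENNReal.ofReal (1 - p)) ^ (n - (f x.1 x.2).card)) := by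
        refine Finset.sum_congr rfl fun f _ => ?_
        rw [pattern_prod h0 h1 i j T hj (Fof f), ← Finset.prod_attach]
        refine Finset.prod_congr rfl fun x _ => ?_
        have : Fof f x.1 = f x.1 x.2 := by rw [hFof]; simp [x.2]
        rw [this]
    _ = ∏ v ∈ T, ∑ A ∈ P,
          ((ENNReal.ofReal p) ^ A.card * (ENNReal.ofReal (1 - p)) ^ (n - A.card)) :=
        (Finset.prod_sum T (fun _ => P) (fun _ A =>
          (ENNReal.ofReal p) ^ A.card * (ENNReal.ofReal (1 - p)) ^ (n - A.card))).symm
    _ = tailE n p s ^ T.card := by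
        rw [Finset.prod_const]
        rfl

def BadSet (H : SimpleGraph (Fin k)) (i : Fin k) (s m : ℕ) :
    Set ((Fin k × Fin n) → (Fin k × Fin n) → Bool) :=
  {ω | m ≤ (Finset.univ.filter fun v : Fin n => s ≤ dMax H ω (i, v)).card}

lemma bad_bound (h0 : 0 ≤ p) (h1 : p ≤ 1) (H : SimpleGraph (Fin k))
    {s : ℕ} (hs : 1 ≤ s) (i : Fin k) (m : ℕ) :
    kpMeasure k n p (BadSet H i s m)
      ≤ (n.choose m) * (k : ENNReal) ^ m * tailE n p s ^ m := by
  classical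
  have hcov : BadSet (n := n) H i s m
      ⊆ ⋃ T ∈ Finset.powersetCard m (Finset.univ : Finset (Fin n)),
          ⋃ jel ∈ T.pi (fun _ => (Finset.univ : Finset (Fin k))),
            {ω | ∀ v ∈ T, s ≤ dPart H ω (i, v)
              (if h : v ∈ T then jel v h else i)} := by
    intro ω hω
    obtain ⟨T, hT, hTcard⟩ := Finset.exists_subset_card_eq hω
    have hTmem : T ∈ Finset.powersetCard m (Finset.univ : Finset (Fin n)) := by
      rw [Finset.mem_powersetCard]
      exact ⟨Finset.subset_univ _, hTcard⟩
    have hd : ∀ v ∈ T, ∃ b : Fin k, s ≤ dPart H ω (i, v) b := by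
      intro v hv
      have := hT hv
      rw [Finset.mem_filter] at this
      have h2 := this.2
      rw [dMax, Finset.le_sup_iff (show (⊥ : ℕ) < s from hs)] at h2
      obtain ⟨b, -, hb⟩ := h2
      exact ⟨b, hb⟩
    set jel : ∀ v ∈ T, Fin k := fun v hv => Classical.choose (hd v hv) with hjel
    refine Set.mem_biUnion hTmem (Set.mem_biUnion (show jel ∈ T.pi _ by
      rw [Finset.mem_pi]; intro v hv; exact Finset.mem_univ _) ?_)
    intro v hv
    simp only [dif_pos hv]
    exact Classical.choose_spec (hd v hv)
  calc kpMeasure k n p (BadSet H i s m)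
      ≤ ∑ T ∈ Finset.powersetCard m (Finset.univ : Finset (Fin n)),
          ∑ jel ∈ T.pi (fun _ => (Finset.univ : Finset (Fin k))),
            kpMeasure k n p {ω | ∀ v ∈ T, s ≤ dPart H ω (i, v)
              (if h : v ∈ T then jel v h else i)} := by
        refine le_trans (measure_mono hcov) ?_
        refine le_trans (measure_biUnion_finset_le _ _) ?_
        exact Finset.sum_le_sum fun T _ => measure_biUnion_finset_le _ _
    _ ≤ ∑ T ∈ Finset.powersetCard m (Finset.univ : Finset (Fin n)),
          ∑ jel ∈ T.pi (fun _ => (Finset.univ : Finset (Fin k))),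
            tailE n p s ^ m := by
        refine Finset.sum_le_sum fun T hT => Finset.sum_le_sum fun jel _ => ?_
        have hTcard : T.card = m := (Finset.mem_powersetCard.1 hT).2
        rw [← hTcard]
        exact master h0 h1 H hs i T _
    _ = (n.choose m) * (k : ENNReal) ^ m * tailE n p s ^ m := by
        have hin : ∀ T ∈ Finset.powersetCard m (Finset.univ : Finset (Fin n)),
            (∑ _jel ∈ T.pi (fun _ => (Finset.univ : Finset (Fin k))), tailE n p s ^ m)
              = (k : ENNReal) ^ m * tailE n p s ^ m := by
          intro T hT
          rw [Finset.sum_const, Finset.card_pi, Finset.prod_const, Finset.card_univ,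
            Fintype.card_fin, (Finset.mem_powersetCard.1 hT).2, nsmul_eq_mul]
          push_cast
          ring
        rw [Finset.sum_congr rfl hin, Finset.sum_const, Finset.card_powersetCard,
          Finset.card_univ, Fintype.card_fin, nsmul_eq_mul, ← mul_assoc]

lemma tailE_le (h0 : 0 ≤ p) (h1 : p ≤ 1) (s : ℕ) {x : ℝ} (hx : 1 ≤ x) :
    tailE n p s ≤ ENNReal.ofReal (x⁻¹ ^ s * Real.exp (n * p * (x - 1))) := by
  classical
  have hq : (0:ℝ) ≤ 1 - p := by linarith
  have hx0 : (0:ℝ) < x := lt_of_lt_of_le one_pos hx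
  set P : Finset (Finset (Fin n)) :=
    (Finset.univ : Finset (Fin n)).powerset.filter (fun A => s ≤ A.card) with hP
  set tailR : ℝ := ∑ A ∈ P, p ^ A.card * (1 - p) ^ (n - A.card) with htailR
  have heq : tailE n p s = ENNReal.ofReal tailR := by
    rw [tailE, htailR, ENNReal.ofReal_sum_of_nonneg (fun A _ =>
      mul_nonneg (pow_nonneg h0 _) (pow_nonneg hq _))]
    refine Finset.sum_congr rfl fun A _ => ?_
    rw [ENNReal.ofReal_mul (pow_nonneg h0 _), ENNReal.ofReal_pow h0, ENNReal.ofReal_pow hq]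
  rw [heq]
  refine ENNReal.ofReal_le_ofReal ?_
  have key : tailR * x ^ s ≤ Real.exp (n * p * (x - 1)) := by
    have step1 : tailR * x ^ s ≤ ∑ A ∈ P, (p * x) ^ A.card * (1 - p) ^ (n - A.card) := by
      rw [htailR, Finset.sum_mul]
      refine Finset.sum_le_sum fun A hA => ?_
      have hAs : s ≤ A.card := (Finset.mem_filter.1 hA).2
      have hxs : x ^ s ≤ x ^ A.card := pow_le_pow_right₀ hx hAs
      calc p ^ A.card * (1 - p) ^ (n - A.card) * x ^ s
          ≤ p ^ A.card * (1 - p) ^ (n - A.card) * x ^ A.card := by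
            exact mul_le_mul_of_nonneg_left hxs
              (mul_nonneg (pow_nonneg h0 _) (pow_nonneg hq _))
        _ = (p * x) ^ A.card * (1 - p) ^ (n - A.card) := by
            rw [mul_pow]; ring
    have step2 : ∑ A ∈ P, (p * x) ^ A.card * (1 - p) ^ (n - A.card)
        ≤ ∑ A ∈ (Finset.univ : Finset (Fin n)).powerset,
            (p * x) ^ A.card * (1 - p) ^ (n - A.card) := by
      refine Finset.sum_le_sum_of_subset_of_nonneg (Finset.filter_subset _ _) ?_
      intro A _ _
      exact mul_nonneg (pow_nonneg (mul_nonneg h0 hx0.le) _) (pow_nonneg hq _)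
    have step3 : ∑ A ∈ (Finset.univ : Finset (Fin n)).powerset,
        (p * x) ^ A.card * (1 - p) ^ (n - A.card) = (p * x + (1 - p)) ^ n := by
      have hpa := Finset.prod_add (fun _ : Fin n => p * x) (fun _ => 1 - p) Finset.univ
      rw [Finset.prod_const, Finset.card_univ, Fintype.card_fin] at hpa
      rw [eq_comm, hpa]
      refine Finset.sum_congr rfl fun A hA => ?_
      rw [Finset.prod_const, Finset.prod_const, Finset.card_sdiff_of_subset (Finset.subset_univ _),
        Finset.card_univ, Fintype.card_fin]
    have step4 : (p * x + (1 - p)) ^ n ≤ Real.exp (n * p * (x - 1)) := by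
      have h5 : p * x + (1 - p) = p * (x - 1) + 1 := by ring
      have h6 : p * (x - 1) + 1 ≤ Real.exp (p * (x - 1)) := Real.add_one_le_exp _
      have h7 : (0:ℝ) ≤ p * (x - 1) + 1 := by nlinarith
      calc (p * x + (1 - p)) ^ n ≤ Real.exp (p * (x - 1)) ^ n := by
            rw [h5]; exact pow_le_pow_left₀ h7 h6 n
        _ = Real.exp (n * (p * (x - 1))) := by rw [← Real.exp_nat_mul]
        _ = Real.exp (n * p * (x - 1)) := by ring_nf
    calc tailR * x ^ s ≤ (p * x + (1 - p)) ^ n := le_trans step1 (le_trans step2 step3.le)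
      _ ≤ Real.exp (n * p * (x - 1)) := step4
  have hxs : (0:ℝ) < x ^ s := pow_pos hx0 s
  rw [inv_pow]
  rw [← le_div_iff₀ hxs] at key
  calc tailR ≤ Real.exp (n * p * (x - 1)) / x ^ s := key
    _ = (x ^ s)⁻¹ * Real.exp (n * p * (x - 1)) := by ring

lemma bad_bound' (h0 : 0 ≤ p) (h1 : p ≤ 1) (H : SimpleGraph (Fin k))
    {s : ℕ} (hs : 1 ≤ s) (i : Fin k) (m : ℕ) {x : ℝ} (hx : 1 ≤ x) :
    kpMeasure k n p (BadSet H i s m)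
      ≤ ENNReal.ofReal ((n * k * (x⁻¹ ^ s * Real.exp (n * p * (x - 1)))) ^ m) := by
  have hx0 : (0:ℝ) < x := lt_of_lt_of_le one_pos hx
  have ht0 : (0:ℝ) ≤ x⁻¹ ^ s * Real.exp (n * p * (x - 1)) :=
    mul_nonneg (pow_nonneg (inv_nonneg.2 hx0.le) _) (Real.exp_nonneg _)
  calc kpMeasure k n p (BadSet H i s m)
      ≤ (n.choose m) * (k : ENNReal) ^ m * tailE n p s ^ m := bad_bound h0 h1 H hs i m
    _ ≤ (n : ENNReal) ^ m * (k : ENNReal) ^ m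
        * ENNReal.ofReal (x⁻¹ ^ s * Real.exp (n * p * (x - 1))) ^ m := by
        refine mul_le_mul' (mul_le_mul' ?_ le_rfl) (pow_le_pow_left' (tailE_le h0 h1 s hx) m)
        calc ((n.choose m : ℕ) : ENNReal) ≤ ((n ^ m : ℕ) : ENNReal) := by
              exact_mod_cast Nat.cast_le.2 (Nat.choose_le_pow n m)
          _ = (n : ENNReal) ^ m := by push_cast; ring
    _ = ENNReal.ofReal ((n * k * (x⁻¹ ^ s * Real.exp (n * p * (x - 1)))) ^ m) := by
        rw [ENNReal.ofReal_pow (by positivity), ENNReal.ofReal_mul (by positivity),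
          ENNReal.ofReal_mul (by positivity), ENNReal.ofReal_mul (by positivity),
          ENNReal.ofReal_natCast, ENNReal.ofReal_natCast,
          ENNReal.ofReal_mul (by positivity : (0:ℝ) ≤ x⁻¹ ^ s)]
        ring

end DK

set_option maxHeartbeats 4000000 in
/-- inequality (5.1) of DeMarco–Kahn.  With large probability, for
every `i ∈ {1,2,3}`: `|D_1(i)| < θ n p^{k−7/5}` and `|D_2(i)| < n p^{k−2} log(1/p)`,
where `θ = 0.05ε`. -/
theorem D_sets_size_bound {k : ℕ} (hk : 4 ≤ k) (H : SimpleGraph (Fin k)) [DecidableRel H.Adj]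
    (i₀ i₁ i₂ : Fin k) (hi₀ : (i₀ : ℕ) = 0) (hi₁ : (i₁ : ℕ) = 1) (hi₂ : (i₂ : ℕ) = 2)
    (hmin : ∀ v : Fin k, k - 2 ≤ H.degree v)
    (hsorted : ∀ i j : Fin k, i ≤ j → H.degree j ≤ H.degree i)
    (hdeg₁ : H.degree i₀ = k - 1)
    (h₂₃ : H.degree i₁ = k - 2 → ¬ H.Adj i₁ i₂)
    (ε : ℝ) (hε : 0 < ε) :
    ∃ C₀ c₀ c : ℝ, 0 < C₀ ∧ 0 < c₀ ∧ 0 < c ∧ ∀ (n : ℕ) (p : ℝ),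
      C₀ * (n : ℝ) ^ (-(2 : ℝ) / ((k : ℝ) - 1)) < p → p < c₀ →
      1 - ENNReal.ofReal (Real.exp (-c * ((n : ℝ) ^ 2 * p ^ (k - 1) * Real.log (1 / p)))) ≤
        kpMeasure k n p {ω | ∀ i : Fin k, (i : ℕ) < 3 →
          ((D1 H p ω i).card : ℝ) < 0.05 * ε * ((n : ℝ) * p ^ ((k : ℝ) - 7 / 5)) ∧
          ((D2 H p ω i).card : ℝ) < (n : ℝ) * p ^ (k - 2) * Real.log (1 / p)} := by
  classical
  have hk0 : 0 < k := by omega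
  have hkR : (4:ℝ) ≤ (k:ℝ) := by exact_mod_cast hk
  have hk0R : (0:ℝ) < (k:ℝ) := by linarith only [hkR]
  set δ := deltaK k with hδdef
  clear_value δ
  have hδ : 0 < δ := by
    rw [hδdef, deltaK, sub_pos]
    exact (Real.one_lt_rpow_iff_of_pos (by norm_num)).2
      (Or.inl ⟨by norm_num, div_pos one_pos hk0R⟩)
  have h1δ : (0:ℝ) < 1 + δ := by linarith only [hδ]
  have hlogδ : 0 < Real.log (1+δ) := Real.log_pos (by linarith)
  have hlog1δ : δ/(1+δ) < Real.log (1+δ) := by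
    rw [Real.lt_log_iff_exp_lt h1δ]
    have hne : -(δ/(1+δ)) ≠ 0 := by
      simp only [ne_eq, neg_eq_zero, div_eq_zero_iff]
      push_neg
      constructor <;> intro h <;> [exact absurd h (ne_of_gt hδ); linarith only [hδ, h]]
    have h2 := Real.add_one_lt_exp hne
    have heq : -(δ/(1+δ)) + 1 = (1+δ)⁻¹ := by field_simp; ring
    rw [heq, Real.exp_neg] at h2
    have hexp : 0 < Real.exp (δ/(1+δ)) := Real.exp_pos _
    have h3 : Real.exp (δ/(1+δ)) * (1+δ)⁻¹ < 1 := by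
      have h4 := mul_lt_mul_of_pos_left h2 hexp
      rwa [mul_inv_cancel₀ (ne_of_gt hexp)] at h4
    have h5 := mul_lt_mul_of_pos_right h3 h1δ
    rwa [one_mul, mul_assoc, inv_mul_cancel₀ (ne_of_gt h1δ), mul_one] at h5
  set β := (1+δ) * Real.log (1+δ) - δ with hβdef
  clear_value β
  have hβ : 0 < β := by
    have h2 := mul_lt_mul_of_pos_left hlog1δ h1δ
    have h3 : (1+δ) * (δ/(1+δ)) = δ := by field_simp
    rw [h3] at h2
    rw [hβdef]; linarith only [h2]
  have hθ : (0:ℝ) < 0.05 * ε := mul_pos (by norm_num) hε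
  set c := min (0.05*ε/8) (β/4) with hcdef
  clear_value c
  have hc : 0 < c := by
    rw [hcdef]
    exact lt_min (by linarith only [hθ]) (by linarith only [hβ])
  set C₀ := max 1 (max ((Real.log k + 3)^((5:ℝ)/2) + 1)
    (max (2*(Real.log k + 3)/β + 1) ((k:ℝ)/c + 1))) with hC₀def
  clear_value C₀
  have hC1 : (1:ℝ) ≤ C₀ := by rw [hC₀def]; exact le_max_left _ _
  have hC0 : (0:ℝ) < C₀ := by linarith only [hC1]
  refine ⟨C₀, Real.exp (-10), c, hC0, Real.exp_pos _, hc, ?_⟩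
  intro n p hp1 hp2
  -- trivial case n = 0
  rcases Nat.eq_zero_or_pos n with hn0 | hn0
  · have hz : -c * ((n:ℝ)^2 * p^(k-1) * Real.log (1/p)) = 0 := by
      rw [hn0]; push_cast; ring
    rw [hz, Real.exp_zero, ENNReal.ofReal_one, tsub_self]
    exact zero_le
  have hN1 : (1:ℝ) ≤ (n:ℝ) := by exact_mod_cast hn0
  have hN0 : (0:ℝ) < (n:ℝ) := by linarith only [hN1]
  have hp0 : 0 < p := lt_trans (mul_pos hC0 (Real.rpow_pos_of_pos hN0 _)) hp1
  have hp1' : p < 1 := by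
    refine lt_trans hp2 ?_
    rw [← Real.exp_zero]
    exact Real.exp_lt_exp.2 (by norm_num)
  have hlogp : Real.log p < -10 := by
    have h2 := Real.log_lt_log hp0 hp2
    rwa [Real.log_exp] at h2
  set L := Real.log (1/p) with hLdef
  clear_value L
  have hLeq : L = -Real.log p := by rw [hLdef, one_div, Real.log_inv]
  have hL10 : 10 ≤ L := by rw [hLeq]; linarith only [hlogp]
  have hL0 : (0:ℝ) < L := by linarith only [hL10]
  -- constants facts
  have hlogk0 : 0 ≤ Real.log k := Real.log_nonneg (by linarith only [hkR])
  have hCA : (Real.log k + 3)^((5:ℝ)/2) + 1 ≤ C₀ := by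
    rw [hC₀def]; exact le_trans (le_max_left _ _) (le_max_right _ _)
  have hCB : 2*(Real.log k + 3)/β + 1 ≤ C₀ := by
    rw [hC₀def]
    exact le_trans (le_trans (le_max_left _ _) (le_max_right _ _)) (le_max_right _ _)
  have hCC : (k:ℝ)/c + 1 ≤ C₀ := by
    rw [hC₀def]
    exact le_trans (le_trans (le_max_right _ _) (le_max_right _ _)) (le_max_right _ _)
  have hCa : Real.log k + 3 ≤ C₀ ^ ((2:ℝ)/5) := by
    have h1 : (Real.log k + 3) ^ ((5:ℝ)/2) ≤ C₀ := by linarith only [hCA]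
    calc Real.log k + 3 = ((Real.log k + 3) ^ ((5:ℝ)/2)) ^ ((2:ℝ)/5) := by
          rw [← Real.rpow_mul (by linarith only [hlogk0])]
          norm_num
      _ ≤ C₀ ^ ((2:ℝ)/5) := Real.rpow_le_rpow (Real.rpow_nonneg (by linarith only [hlogk0]) _) h1 (by norm_num)
  have hCb : Real.log k + 3 ≤ β/2 * C₀ := by
    have h1 : 2*(Real.log k + 3)/β ≤ C₀ := by linarith only [hCB]
    rw [div_le_iff₀ hβ] at h1
    linarith only [h1]
  have hCc : (k:ℝ) ≤ c * C₀ := by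
    have h1 : (k:ℝ)/c ≤ C₀ := by linarith only [hCC]
    rw [div_le_iff₀ hc] at h1
    linarith only [h1]
  have hk3 : (3:ℝ) ≤ (k:ℝ) - 1 := by linarith only [hkR]
  -- power comparisons
  have hP1 : C₀ * (n:ℝ)^((1:ℝ)/3) ≤ (n:ℝ) * p := by
    have h1 : (n:ℝ) * (C₀ * (n:ℝ)^(-(2:ℝ)/((k:ℝ)-1))) ≤ (n:ℝ) * p :=
      mul_le_mul_of_nonneg_left hp1.le hN0.le
    have h2 : (n:ℝ) * (C₀ * (n:ℝ)^(-(2:ℝ)/((k:ℝ)-1)))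
        = C₀ * ((n:ℝ)^(1:ℝ) * (n:ℝ)^(-(2:ℝ)/((k:ℝ)-1))) := by
      rw [Real.rpow_one]; ring
    have h3 : (n:ℝ)^(1:ℝ) * (n:ℝ)^(-(2:ℝ)/((k:ℝ)-1)) = (n:ℝ)^(1 + -(2:ℝ)/((k:ℝ)-1)) :=
      (Real.rpow_add hN0 _ _).symm
    have h4 : (n:ℝ)^((1:ℝ)/3) ≤ (n:ℝ)^(1 + -(2:ℝ)/((k:ℝ)-1)) := by
      refine Real.rpow_le_rpow_of_exponent_le hN1 ?_
      have h5 : (2:ℝ)/((k:ℝ)-1) ≤ 2/3 := by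
        rw [div_le_div_iff₀ (by linarith only [hk3]) (by norm_num)]
        linarith only [hk3]
      have h6 : -(2:ℝ)/((k:ℝ)-1) = -((2:ℝ)/((k:ℝ)-1)) := by ring
      rw [h6]; linarith only [h5]
    calc C₀ * (n:ℝ)^((1:ℝ)/3) ≤ C₀ * (n:ℝ)^(1 + -(2:ℝ)/((k:ℝ)-1)) :=
          mul_le_mul_of_nonneg_left h4 hC0.le
      _ = (n:ℝ) * (C₀ * (n:ℝ)^(-(2:ℝ)/((k:ℝ)-1))) := by rw [h2, h3]
      _ ≤ (n:ℝ) * p := h1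
  have hP2 : C₀^((2:ℝ)/5) * (n:ℝ)^((1:ℝ)/3) ≤ (n:ℝ) * p^((2:ℝ)/5) := by
    have hb0 : (0:ℝ) ≤ C₀ * (n:ℝ)^(-(2:ℝ)/((k:ℝ)-1)) :=
      mul_nonneg hC0.le (Real.rpow_pos_of_pos hN0 _).le
    have h1 : (C₀ * (n:ℝ)^(-(2:ℝ)/((k:ℝ)-1)))^((2:ℝ)/5) ≤ p^((2:ℝ)/5) :=
      Real.rpow_le_rpow hb0 hp1.le (by norm_num)
    have h2 : (C₀ * (n:ℝ)^(-(2:ℝ)/((k:ℝ)-1)))^((2:ℝ)/5)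
        = C₀^((2:ℝ)/5) * (n:ℝ)^((-(2:ℝ)/((k:ℝ)-1)) * ((2:ℝ)/5)) := by
      rw [Real.mul_rpow hC0.le (Real.rpow_pos_of_pos hN0 _).le, ← Real.rpow_mul hN0.le]
    have h3 : (n:ℝ) * ((n:ℝ)^((-(2:ℝ)/((k:ℝ)-1)) * ((2:ℝ)/5)))
        = (n:ℝ)^(1 + (-(2:ℝ)/((k:ℝ)-1)) * ((2:ℝ)/5)) := by
      rw [Real.rpow_add hN0, Real.rpow_one]
    have h4 : (n:ℝ)^((1:ℝ)/3) ≤ (n:ℝ)^(1 + (-(2:ℝ)/((k:ℝ)-1)) * ((2:ℝ)/5)) := by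
      refine Real.rpow_le_rpow_of_exponent_le hN1 ?_
      have h5 : (4:ℝ)/5/((k:ℝ)-1) ≤ 2/3 := by
        rw [div_le_div_iff₀ (by linarith only [hk3]) (by norm_num)]
        linarith only [hk3]
      have h6 : (1:ℝ) + (-(2:ℝ)/((k:ℝ)-1)) * ((2:ℝ)/5) = 1 - (4:ℝ)/5/((k:ℝ)-1) := by
        ring
      rw [h6]; linarith only [h5]
    calc C₀^((2:ℝ)/5) * (n:ℝ)^((1:ℝ)/3)
        ≤ C₀^((2:ℝ)/5) * (n:ℝ)^(1 + (-(2:ℝ)/((k:ℝ)-1)) * ((2:ℝ)/5)) :=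
          mul_le_mul_of_nonneg_left h4 (Real.rpow_nonneg hC0.le _)
      _ = (n:ℝ) * (C₀^((2:ℝ)/5) * (n:ℝ)^((-(2:ℝ)/((k:ℝ)-1)) * ((2:ℝ)/5))) := by
          rw [← h3]; ring
      _ = (n:ℝ) * ((C₀ * (n:ℝ)^(-(2:ℝ)/((k:ℝ)-1)))^((2:ℝ)/5)) := by rw [h2]
      _ ≤ (n:ℝ) * p^((2:ℝ)/5) := mul_le_mul_of_nonneg_left h1 hN0.le
  have hP3 : C₀ ≤ (n:ℝ)^2 * p^(k-1) := by
    have hb0 : (0:ℝ) ≤ C₀ * (n:ℝ)^(-(2:ℝ)/((k:ℝ)-1)) :=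
      mul_nonneg hC0.le (Real.rpow_pos_of_pos hN0 _).le
    have h1 : (C₀ * (n:ℝ)^(-(2:ℝ)/((k:ℝ)-1)))^(k-1) ≤ p^(k-1) :=
      pow_le_pow_left₀ hb0 hp1.le _
    have h3 : ((n:ℝ)^(-(2:ℝ)/((k:ℝ)-1)))^(k-1)
        = (n:ℝ)^((-(2:ℝ)/((k:ℝ)-1)) * ((k-1:ℕ):ℝ)) := by
      rw [Real.rpow_mul hN0.le, Real.rpow_natCast]
    have h4 : (-(2:ℝ)/((k:ℝ)-1)) * ((k-1:ℕ):ℝ) = -2 := by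
      have hcast : ((k-1:ℕ):ℝ) = (k:ℝ) - 1 := by
        push_cast [Nat.cast_sub (show 1 ≤ k by omega)]
        ring
      rw [hcast]
      field_simp
    have h5 : (n:ℝ)^(-2:ℝ) = ((n:ℝ)^2)⁻¹ := by
      rw [show (-2:ℝ) = -((2:ℕ):ℝ) by norm_num, Real.rpow_neg hN0.le, Real.rpow_natCast]
    have h6 : (C₀ * (n:ℝ)^(-(2:ℝ)/((k:ℝ)-1)))^(k-1)
        = C₀^(k-1) * ((n:ℝ)^2)⁻¹ := by
      rw [mul_pow, h3, h4, h5]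
    have h7 : C₀^(k-1) ≤ (n:ℝ)^2 * p^(k-1) := by
      have h8 := mul_le_mul_of_nonneg_left h1 (by positivity : (0:ℝ) ≤ (n:ℝ)^2)
      rw [h6] at h8
      have h9 : (n:ℝ)^2 * (C₀^(k-1) * ((n:ℝ)^2)⁻¹) = C₀^(k-1) := by
        field_simp
      rwa [h9] at h8
    exact le_trans (le_self_pow₀ hC1 (by omega)) h7
  have hQ : Real.log ((n:ℝ) * k) ≤ (Real.log k + 3) * (n:ℝ)^((1:ℝ)/3) := by
    rw [Real.log_mul (ne_of_gt hN0) (ne_of_gt hk0R)]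
    have hone : (1:ℝ) ≤ (n:ℝ)^((1:ℝ)/3) := by
      calc (1:ℝ) = (n:ℝ)^(0:ℝ) := (Real.rpow_zero _).symm
        _ ≤ (n:ℝ)^((1:ℝ)/3) := Real.rpow_le_rpow_of_exponent_le hN1 (by norm_num)
    have hln : Real.log n ≤ 3 * (n:ℝ)^((1:ℝ)/3) := by
      have h1 : Real.log ((n:ℝ)^((1:ℝ)/3)) = (1/3) * Real.log n := by
        rw [Real.log_rpow hN0]
      have h2 : Real.log ((n:ℝ)^((1:ℝ)/3)) ≤ (n:ℝ)^((1:ℝ)/3) := by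
        have h3 := Real.log_le_sub_one_of_pos
          (show (0:ℝ) < (n:ℝ)^((1:ℝ)/3) from Real.rpow_pos_of_pos hN0 _)
        linarith only [h3]
      linarith only [h1, h2]
    have h4 : (0:ℝ) ≤ Real.log k * ((n:ℝ)^((1:ℝ)/3) - 1) :=
      mul_nonneg hlogk0 (by linarith only [hone])
    have h5 : Real.log k * ((n:ℝ)^((1:ℝ)/3) - 1)
        = (Real.log k + 3) * (n:ℝ)^((1:ℝ)/3) - 3*(n:ℝ)^((1:ℝ)/3) - Real.log k := by ring
    linarith only [hln, h4, h5]
  haveI : IsProbabilityMeasure (kpMeasure k n p) := DK.kp_prob hp0.le hp1'.le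
  set s1 := ⌊(n:ℝ) * p^((2:ℝ)/5)⌋₊ + 1 with hs1def
  set s2 := ⌊(1 + δ) * (n:ℝ) * p⌋₊ + 1 with hs2def
  set m1 := ⌈0.05 * ε * ((n:ℝ) * p^((k:ℝ) - 7/5))⌉₊ with hm1def
  set m2 := ⌈(n:ℝ) * p^(k-2) * L⌉₊ with hm2def
  have hs1low : (n:ℝ) * p^((2:ℝ)/5) ≤ (s1:ℝ) := by
    rw [hs1def]; push_cast
    exact (Nat.lt_floor_add_one _).le
  have hs2low : (1+δ) * (n:ℝ) * p ≤ (s2:ℝ) := by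
    rw [hs2def]; push_cast
    exact (Nat.lt_floor_add_one _).le
  have hm1low : 0.05 * ε * ((n:ℝ) * p^((k:ℝ) - 7/5)) ≤ (m1:ℝ) := Nat.le_ceil _
  have hm2low : (n:ℝ) * p^(k-2) * L ≤ (m2:ℝ) := Nat.le_ceil _
  set X := (n:ℝ)^2 * p^(k-1) * L with hXdef
  clear_value X
  have hX0 : (0:ℝ) ≤ X := by
    rw [hXdef]
    have := hL0.le
    positivity
  have hXC : 10 * C₀ ≤ X := by
    calc 10 * C₀ ≤ C₀ * L := by
          have h1 : (0:ℝ) ≤ C₀ * (L - 10) := mul_nonneg hC0.le (by linarith only [hL10])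
          linarith only [h1]
      _ ≤ ((n:ℝ)^2 * p^(k-1)) * L := mul_le_mul_of_nonneg_right hP3 hL0.le
      _ = X := by rw [hXdef]
  -- Chain 1
  have hB1 : ∀ i : Fin k, kpMeasure k n p (DK.BadSet H i s1 m1)
      ≤ ENNReal.ofReal (Real.exp (-(0.05*ε/4) * X)) := by
    intro i
    have hph : 0 < p^((1:ℝ)/2) := Real.rpow_pos_of_pos hp0 _
    have hph1 : p^((1:ℝ)/2) ≤ 1 := Real.rpow_le_one hp0.le hp1'.le (by norm_num)
    set x := (p ^ ((1:ℝ)/2))⁻¹ with hxdef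
    have hx1 : 1 ≤ x := by
      rw [hxdef]
      exact (one_le_inv₀ hph).2 hph1
    have hbb := DK.bad_bound' (n := n) hp0.le hp1'.le H
      (show 1 ≤ s1 by rw [hs1def]; omega) i m1 hx1
    refine le_trans hbb (ENNReal.ofReal_le_ofReal ?_)
    have hxinv : x⁻¹ = p^((1:ℝ)/2) := by rw [hxdef, inv_inv]
    rw [hxinv]
    have ha : (p^((1:ℝ)/2))^s1 = Real.exp (-(s1 * (L/2))) := by
      rw [Real.rpow_def_of_pos hp0, ← Real.exp_nat_mul]
      congr 1
      rw [hLeq]; ring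
    have hb : (n:ℝ)*p*(x-1) ≤ (1/8)*(s1*L) := by
      have hpx : p * x = p^((1:ℝ)/2) := by
        rw [hxdef, ← Real.rpow_neg hp0.le]
        nth_rewrite 1 [← Real.rpow_one p]
        rw [← Real.rpow_add hp0]
        norm_num
      have h1 : (n:ℝ)*p*(x-1) ≤ (n:ℝ)*(p*x) := by
        have h2 : (n:ℝ)*p*(x-1) = (n:ℝ)*(p*x) - (n:ℝ)*p := by ring
        have h3 : (0:ℝ) ≤ (n:ℝ)*p := by positivity
        linarith only [h2, h3]
      have h2 : (n:ℝ)*(p*x) = ((n:ℝ)*p^((2:ℝ)/5)) * p^((1:ℝ)/10) := by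
        rw [hpx, show ((1:ℝ)/2) = (2:ℝ)/5 + (1:ℝ)/10 by norm_num, Real.rpow_add hp0]
        ring
      have h3 : ((n:ℝ)*p^((2:ℝ)/5)) * p^((1:ℝ)/10) ≤ (s1:ℝ) * 1 :=
        mul_le_mul hs1low (Real.rpow_le_one hp0.le hp1'.le (by norm_num))
          (Real.rpow_nonneg hp0.le _) (Nat.cast_nonneg _)
      have h4 : (s1:ℝ) * 1 ≤ (1/8)*(s1*L) := by
        have h5 : (0:ℝ) ≤ (s1:ℝ) * (L/8 - 1) :=
          mul_nonneg (Nat.cast_nonneg _) (by linarith only [hL10])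
        have h6 : (s1:ℝ) * (L/8 - 1) = (1/8)*((s1:ℝ)*L) - (s1:ℝ)*1 := by ring
        linarith only [h5, h6]
      linarith only [h1, h2, h3, h4]
    have hcc : (n:ℝ)*k ≤ Real.exp ((1/8)*(s1*L)) := by
      have hnk : (0:ℝ) < (n:ℝ)*k := mul_pos hN0 hk0R
      rw [← Real.exp_log hnk]
      refine Real.exp_le_exp.2 ?_
      have hs1p : (0:ℝ) ≤ (s1:ℝ) := Nat.cast_nonneg _
      calc Real.log ((n:ℝ)*k) ≤ (Real.log k + 3) * (n:ℝ)^((1:ℝ)/3) := hQ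
        _ ≤ C₀^((2:ℝ)/5) * (n:ℝ)^((1:ℝ)/3) :=
            mul_le_mul_of_nonneg_right hCa (by positivity)
        _ ≤ (n:ℝ) * p^((2:ℝ)/5) := hP2
        _ ≤ (s1:ℝ) := hs1low
        _ ≤ (1/8)*((s1:ℝ)*L) := by
            have h5 : (0:ℝ) ≤ (s1:ℝ) * (L/8 - 1) :=
              mul_nonneg (Nat.cast_nonneg _) (by linarith only [hL10])
            have h6 : (s1:ℝ) * (L/8 - 1) = (1/8)*((s1:ℝ)*L) - (s1:ℝ) := by ring
            linarith only [h5, h6]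
    have hA : (n:ℝ)*k*((p^((1:ℝ)/2))^s1 * Real.exp ((n:ℝ)*p*(x-1)))
        ≤ Real.exp (-(1/4)*((s1:ℝ)*L)) := by
      calc (n:ℝ)*k*((p^((1:ℝ)/2))^s1 * Real.exp ((n:ℝ)*p*(x-1)))
          ≤ Real.exp ((1/8)*(s1*L)) * (Real.exp (-(s1 * (L/2))) * Real.exp ((1/8)*(s1*L))) := by
            rw [ha]
            refine mul_le_mul hcc (mul_le_mul_of_nonneg_left
              (Real.exp_le_exp.2 hb) (Real.exp_nonneg _))
              (mul_nonneg (Real.exp_nonneg _) (Real.exp_nonneg _)) (Real.exp_nonneg _)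
        _ = Real.exp ((1/8)*(s1*L) + (-(s1 * (L/2)) + (1/8)*(s1*L))) := by
            rw [← Real.exp_add, ← Real.exp_add]
        _ = Real.exp (-(1/4)*((s1:ℝ)*L)) := by ring_nf
    calc ((n:ℝ)*k*((p^((1:ℝ)/2))^s1 * Real.exp ((n:ℝ)*p*(x-1))))^m1
        ≤ (Real.exp (-(1/4)*((s1:ℝ)*L)))^m1 := by
          refine pow_le_pow_left₀ ?_ hA m1
          have hph2 : (0:ℝ) ≤ (p^((1:ℝ)/2))^s1 := pow_nonneg hph.le _
          have hnk2 : (0:ℝ) ≤ (n:ℝ)*k := mul_nonneg hN0.le hk0R.le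
          exact mul_nonneg hnk2 (mul_nonneg hph2 (Real.exp_nonneg _))
      _ = Real.exp ((m1:ℝ) * (-(1/4)*((s1:ℝ)*L))) := by rw [← Real.exp_nat_mul]
      _ ≤ Real.exp (-(0.05*ε/4) * X) := by
          refine Real.exp_le_exp.2 ?_
          have key : 0.05*ε * X ≤ (s1:ℝ)*L*(m1:ℝ) := by
            have hmul : ((n:ℝ)*p^((2:ℝ)/5)) * (0.05*ε*((n:ℝ)*p^((k:ℝ)-7/5)))
                ≤ (s1:ℝ)*(m1:ℝ) :=
              mul_le_mul hs1low hm1low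
                (mul_nonneg hθ.le (mul_nonneg hN0.le (Real.rpow_nonneg hp0.le _)))
                (Nat.cast_nonneg _)
            have heq2 : ((n:ℝ)*p^((2:ℝ)/5)) * (0.05*ε*((n:ℝ)*p^((k:ℝ)-7/5)))
                = 0.05*ε*((n:ℝ)^2 * (p^((2:ℝ)/5) * p^((k:ℝ)-7/5))) := by ring
            have heq3 : p^((2:ℝ)/5) * p^((k:ℝ)-7/5) = p^((k:ℝ)-1) := by
              rw [← Real.rpow_add hp0]
              ring_nf
            have heq4 : p^((k:ℝ)-1) = p^(k-1) := by
              rw [← Real.rpow_natCast p (k-1)]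
              congr 1
              push_cast [Nat.cast_sub (show 1 ≤ k by omega)]
              ring
            rw [heq2, heq3, heq4] at hmul
            calc 0.05*ε*X = (0.05*ε*((n:ℝ)^2*p^(k-1))) * L := by rw [hXdef]; ring
              _ = (0.05*ε*((n:ℝ)^2*(p^(k-1)))) * L := by ring
              _ ≤ ((s1:ℝ)*(m1:ℝ))*L := mul_le_mul_of_nonneg_right (by linarith only [hmul]) hL0.le
              _ = (s1:ℝ)*L*(m1:ℝ) := by ring
          linarith only [key]
  -- Chain 2
  have hB2 : ∀ i : Fin k, kpMeasure k n p (DK.BadSet H i s2 m2)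
      ≤ ENNReal.ofReal (Real.exp (-(β/2) * X)) := by
    intro i
    have hx1 : (1:ℝ) ≤ 1 + δ := by linarith only [hδ]
    have hbb := DK.bad_bound' (n := n) hp0.le hp1'.le H
      (show 1 ≤ s2 by rw [hs2def]; omega) i m2 hx1
    refine le_trans hbb (ENNReal.ofReal_le_ofReal ?_)
    have ha2 : ((1+δ)⁻¹)^s2 = Real.exp (-((s2:ℝ) * Real.log (1+δ))) := by
      rw [show (1+δ)⁻¹ = Real.exp (-(Real.log (1+δ))) by
        rw [Real.exp_neg, Real.exp_log h1δ]]
      rw [← Real.exp_nat_mul]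
      congr 1
      ring
    have hb2 : (n:ℝ)*p*((1+δ)-1) = (n:ℝ)*p*δ := by ring
    have hexp2 : -((s2:ℝ) * Real.log (1+δ)) + (n:ℝ)*p*δ ≤ -(β * ((n:ℝ)*p)) := by
      have h1 := mul_le_mul_of_nonneg_right hs2low hlogδ.le
      rw [hβdef]
      linarith only [h1]
    have hcc2 : (n:ℝ)*k ≤ Real.exp (β/2 * ((n:ℝ)*p)) := by
      have hnk : (0:ℝ) < (n:ℝ)*k := mul_pos hN0 hk0R
      rw [← Real.exp_log hnk]
      refine Real.exp_le_exp.2 ?_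
      calc Real.log ((n:ℝ)*k) ≤ (Real.log k + 3) * (n:ℝ)^((1:ℝ)/3) := hQ
        _ ≤ (β/2 * C₀) * (n:ℝ)^((1:ℝ)/3) :=
            mul_le_mul_of_nonneg_right hCb (by positivity)
        _ = β/2 * (C₀ * (n:ℝ)^((1:ℝ)/3)) := by ring
        _ ≤ β/2 * ((n:ℝ)*p) := mul_le_mul_of_nonneg_left hP1 (by linarith only [hβ])
    have hA2 : (n:ℝ)*k*(((1+δ)⁻¹)^s2 * Real.exp ((n:ℝ)*p*((1+δ)-1)))
        ≤ Real.exp (-(β/2) * ((n:ℝ)*p)) := by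
      rw [ha2, hb2, ← Real.exp_add]
      calc (n:ℝ)*k * Real.exp (-((s2:ℝ) * Real.log (1+δ)) + (n:ℝ)*p*δ)
          ≤ Real.exp (β/2 * ((n:ℝ)*p)) * Real.exp (-(β * ((n:ℝ)*p))) :=
            mul_le_mul hcc2 (Real.exp_le_exp.2 hexp2) (Real.exp_nonneg _) (Real.exp_nonneg _)
        _ = Real.exp (β/2 * ((n:ℝ)*p) + -(β * ((n:ℝ)*p))) := by rw [← Real.exp_add]
        _ = Real.exp (-(β/2) * ((n:ℝ)*p)) := by ring_nf
    calc ((n:ℝ)*k*(((1+δ)⁻¹)^s2 * Real.exp ((n:ℝ)*p*((1+δ)-1))))^m2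
        ≤ (Real.exp (-(β/2) * ((n:ℝ)*p)))^m2 := by
          refine pow_le_pow_left₀ ?_ hA2 m2
          exact mul_nonneg (mul_nonneg hN0.le hk0R.le)
            (mul_nonneg (pow_nonneg (inv_nonneg.2 h1δ.le) _) (Real.exp_nonneg _))
      _ = Real.exp ((m2:ℝ) * (-(β/2) * ((n:ℝ)*p))) := by rw [← Real.exp_nat_mul]
      _ ≤ Real.exp (-(β/2) * X) := by
          refine Real.exp_le_exp.2 ?_
          have hpk : p * p^(k-2) = p^(k-1) := by
            rw [show k-1 = (k-2)+1 by omega, pow_succ']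
          have h1 : X ≤ ((n:ℝ)*p) * (m2:ℝ) := by
            calc X = ((n:ℝ)*p) * ((n:ℝ) * p^(k-2) * L) := by
                  rw [hXdef, ← hpk]; ring
              _ ≤ ((n:ℝ)*p) * (m2:ℝ) :=
                  mul_le_mul_of_nonneg_left hm2low (mul_nonneg hN0.le hp0.le)
          have h2 := mul_le_mul_of_nonneg_left h1 (by linarith only [hβ] : (0:ℝ) ≤ β/2)
          linarith only [h2]
  -- assemble
  set E := {ω : (Fin k × Fin n) → (Fin k × Fin n) → Bool | ∀ i : Fin k, (i : ℕ) < 3 →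
      ((D1 H p ω i).card : ℝ) < 0.05 * ε * ((n : ℝ) * p ^ ((k : ℝ) - 7 / 5)) ∧
      ((D2 H p ω i).card : ℝ) < (n : ℝ) * p ^ (k - 2) * L} with hEdef
  set B := ⋃ i ∈ (Finset.univ : Finset (Fin k)),
    (DK.BadSet H i s1 m1 ∪ DK.BadSet H i s2 m2) with hBdef
  have hnotE : ∀ ω, ω ∉ E → ω ∈ B := by
    intro ω hω
    rw [hEdef] at hω
    simp only [Set.mem_setOf_eq, not_forall] at hω
    obtain ⟨i, hi3, hbad⟩ := hω
    rw [not_and_or] at hbad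
    rw [hBdef]
    rcases hbad with hbad | hbad
    · push_neg at hbad
      refine Set.mem_biUnion (Finset.mem_univ i) (Or.inl ?_)
      show m1 ≤ (Finset.univ.filter fun v : Fin n => s1 ≤ dMax H ω (i, v)).card
      have hm1le : m1 ≤ (D1 H p ω i).card := Nat.ceil_le.2 (by exact_mod_cast hbad)
      refine le_trans hm1le (Finset.card_le_card ?_)
      intro v hv
      rw [D1, Finset.mem_filter] at hv
      rw [Finset.mem_filter]
      refine ⟨Finset.mem_univ _, ?_⟩
      have h2 : ⌊(n:ℝ) * p^((2:ℝ)/5)⌋₊ < dMax H ω (i, v) :=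
        (Nat.floor_lt (mul_nonneg hN0.le (Real.rpow_nonneg hp0.le _))).2 hv.2
      omega
    · push_neg at hbad
      refine Set.mem_biUnion (Finset.mem_univ i) (Or.inr ?_)
      show m2 ≤ (Finset.univ.filter fun v : Fin n => s2 ≤ dMax H ω (i, v)).card
      have hm2le : m2 ≤ (D2 H p ω i).card := Nat.ceil_le.2 (by exact_mod_cast hbad)
      refine le_trans hm2le (Finset.card_le_card ?_)
      intro v hv
      rw [D2, Finset.mem_filter] at hv
      rw [Finset.mem_filter]
      refine ⟨Finset.mem_univ _, ?_⟩
      have h2 : ⌊(1+δ) * (n:ℝ) * p⌋₊ < dMax H ω (i, v) := by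
        refine (Nat.floor_lt (mul_nonneg (mul_nonneg h1δ.le hN0.le) hp0.le)).2 ?_
        rw [hδdef]
        exact hv.2.1
      omega
  have hμB : kpMeasure k n p B ≤ ENNReal.ofReal (Real.exp (-c * X)) := by
    calc kpMeasure k n p B
        ≤ ∑ i ∈ (Finset.univ : Finset (Fin k)),
            kpMeasure k n p (DK.BadSet H i s1 m1 ∪ DK.BadSet H i s2 m2) := by
          rw [hBdef]
          exact measure_biUnion_finset_le _ _
      _ ≤ ∑ i ∈ (Finset.univ : Finset (Fin k)),
            (ENNReal.ofReal (Real.exp (-(0.05*ε/4) * X))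
              + ENNReal.ofReal (Real.exp (-(β/2) * X))) := by
          refine Finset.sum_le_sum fun i _ => ?_
          exact le_trans (measure_union_le _ _) (add_le_add (hB1 i) (hB2 i))
      _ = (k : ENNReal) * (ENNReal.ofReal (Real.exp (-(0.05*ε/4) * X))
              + ENNReal.ofReal (Real.exp (-(β/2) * X))) := by
          rw [Finset.sum_const, Finset.card_univ, Fintype.card_fin, nsmul_eq_mul]
      _ = ENNReal.ofReal ((k:ℝ) * (Real.exp (-(0.05*ε/4) * X) + Real.exp (-(β/2) * X))) := by
          rw [ENNReal.ofReal_mul (by positivity), ENNReal.ofReal_add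
            (Real.exp_nonneg _) (Real.exp_nonneg _), ENNReal.ofReal_natCast]
      _ ≤ ENNReal.ofReal (Real.exp (-c * X)) := by
          refine ENNReal.ofReal_le_ofReal ?_
          have hc1 : c ≤ 0.05*ε/8 := by rw [hcdef]; exact min_le_left _ _
          have hc2 : c ≤ β/4 := by rw [hcdef]; exact min_le_right _ _
          have he1 : Real.exp (-(0.05*ε/4) * X) ≤ Real.exp (-(2*c) * X) := by
            refine Real.exp_le_exp.2 ?_
            have hm : (0:ℝ) ≤ (0.05*ε/4 - 2*c) * X :=
              mul_nonneg (by linarith only [hc1]) hX0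
            have hmm : (0.05*ε/4 - 2*c) * X = -(2*c)*X - (-(0.05*ε/4)*X) := by ring
            linarith only [hm, hmm]
          have he2 : Real.exp (-(β/2) * X) ≤ Real.exp (-(2*c) * X) := by
            refine Real.exp_le_exp.2 ?_
            have hm : (0:ℝ) ≤ (β/2 - 2*c) * X :=
              mul_nonneg (by linarith only [hc2]) hX0
            have hmm : (β/2 - 2*c) * X = -(2*c)*X - (-(β/2)*X) := by ring
            linarith only [hm, hmm]
          have hek : 2*(k:ℝ) ≤ Real.exp (c * X) := by
            have h1 : 10 * (c * C₀) ≤ c * X := by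
              have h0 := mul_le_mul_of_nonneg_left hXC hc.le
              linarith only [h0]
            have h2 : 10 * (k:ℝ) ≤ c * X := by
              linarith only [h1, hCc]
            have h3 : 10*(k:ℝ) + 1 ≤ Real.exp (10*(k:ℝ)) := by
              have h4 := Real.add_one_le_exp (10*(k:ℝ))
              linarith only [h4]
            calc 2*(k:ℝ) ≤ 10*(k:ℝ) + 1 := by linarith only [hk0R]
              _ ≤ Real.exp (10*(k:ℝ)) := h3
              _ ≤ Real.exp (c * X) := Real.exp_le_exp.2 h2
          have hsplit : Real.exp (-(2*c) * X) * Real.exp (c * X) = Real.exp (-c * X) := by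
            rw [← Real.exp_add]
            ring_nf
          calc (k:ℝ) * (Real.exp (-(0.05*ε/4) * X) + Real.exp (-(β/2) * X))
              ≤ (k:ℝ) * (2 * Real.exp (-(2*c) * X)) := by
                have h7 := mul_le_mul_of_nonneg_left
                  (add_le_add he1 he2) hk0R.le
                linarith only [h7]
            _ = (2*(k:ℝ)) * Real.exp (-(2*c) * X) := by ring
            _ ≤ Real.exp (c * X) * Real.exp (-(2*c) * X) :=
                mul_le_mul_of_nonneg_right hek (Real.exp_nonneg _)
            _ = Real.exp (-c * X) := by rw [← hsplit]; ring
  have hEB : Set.univ ⊆ E ∪ B := by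
    intro ω _
    by_cases hE : ω ∈ E
    · exact Or.inl hE
    · exact Or.inr (hnotE ω hE)
  have hone : (1:ENNReal) ≤ kpMeasure k n p E + kpMeasure k n p B := by
    have h1 : (1:ENNReal) = kpMeasure k n p Set.univ := measure_univ.symm
    rw [h1]
    exact le_trans (measure_mono hEB) (measure_union_le _ _)
  calc 1 - ENNReal.ofReal (Real.exp (-c * X))
      ≤ 1 - kpMeasure k n p B := tsub_le_tsub_left hμB 1
    _ ≤ kpMeasure k n p E := by
        rw [tsub_le_iff_right]
        exact le_trans hone (add_le_add_left le_rfl _)
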